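/- arXiv:1303.2416 — 5 statements merged into one kernel-verified Lean document; each statement's English description precedes it below -/
import Mathlib

section
/- For positive integers n and d, if A and B are disjoint subsets of Z^d each of size n, then there exist points p in A and q in B such that the Chebyshev (L-infinity) distance between p and q is at least ⌈(1/2)⌈(2n)^(1/d)⌉⌉ - 1. -/
/-- For positive integers `n` and `d`, if `A` and `B` are disjoint subsets of `ℤ^d` each of
size `n`, then there exist `p ∈ A` and `q ∈ B` whose Chebyshev (L∞) distance
`max_{1 ≤ i ≤ d} |p i - q i|` is at least `⌈(1/2)·⌈(2n)^(1/d)⌉⌉ - 1`. -/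
theorem point_crowding (n d : ℕ) (hn : 0 < n) (hd : 0 < d)
    (A B : Finset (Fin d → ℤ)) (hAB : Disjoint A B)
    (hA : A.card = n) (hB : B.card = n) :
    ∃ p ∈ A, ∃ q ∈ B,
      ((⌈(⌈((2 * n : ℝ)) ^ ((1 : ℝ) / d)⌉ : ℝ) / 2⌉ - 1 : ℤ)) ≤
        Finset.univ.sup' (Finset.univ_nonempty_iff.mpr ⟨⟨0, hd⟩⟩)
          (fun i : Fin d => |p i - q i|) := by
  have hAne : A.Nonempty := Finset.card_pos.mp (hA ▸ hn)
  have hBne : B.Nonempty := Finset.card_pos.mp (hB ▸ hn)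
  have hSne : (A ×ˢ B).Nonempty := hAne.product hBne
  have hne : (Finset.univ : Finset (Fin d)).Nonempty :=
    Finset.univ_nonempty_iff.mpr ⟨⟨0, hd⟩⟩
  obtain ⟨pq, hpq, hmax⟩ := Finset.exists_max_image (A ×ˢ B)
      (fun x => Finset.univ.sup' hne (fun i => |x.1 i - x.2 i|)) hSne
  obtain ⟨hpA, hqB⟩ := Finset.mem_product.mp hpq
  set p := pq.1 with hp
  set q := pq.2 with hq
  set K : ℤ := Finset.univ.sup' hne (fun i => |p i - q i|) with hKdef
  refine ⟨p, hpA, q, hqB, ?_⟩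
  show _ ≤ K
  have hK0 : 0 ≤ K :=
    le_trans (abs_nonneg (p ⟨0, hd⟩ - q ⟨0, hd⟩))
      (Finset.le_sup' (fun i => |p i - q i|) (Finset.mem_univ (⟨0, hd⟩ : Fin d)))
  have hcross : ∀ a ∈ A, ∀ b ∈ B, ∀ i, |a i - b i| ≤ K := by
    intro a ha b hb i
    have h := hmax (a, b) (Finset.mem_product.mpr ⟨ha, hb⟩)
    exact le_trans (Finset.le_sup' (fun j => |a j - b j|) (Finset.mem_univ i)) h
  set C := A ∪ B with hC
  have hCne : C.Nonempty := hAne.mono Finset.subset_union_left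
  have habs : ∀ x ∈ C, ∀ y ∈ C, ∀ i, |x i - y i| ≤ 2 * K := by
    intro x hx y hy i
    rcases Finset.mem_union.mp hx with hx' | hx' <;>
      rcases Finset.mem_union.mp hy with hy' | hy'
    · calc |x i - y i| ≤ |x i - q i| + |q i - y i| := abs_sub_le _ _ _
        _ ≤ K + K := add_le_add (hcross x hx' q hqB i)
            (by rw [abs_sub_comm]; exact hcross y hy' q hqB i)
        _ = 2 * K := by ring
    · linarith [hcross x hx' y hy' i]
    · rw [abs_sub_comm]; linarith [hcross y hy' x hx' i]
    · calc |x i - y i| ≤ |x i - p i| + |p i - y i| := abs_sub_le _ _ _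
        _ ≤ K + K := add_le_add
            (by rw [abs_sub_comm]; exact hcross p hpA x hx' i)
            (hcross p hpA y hy' i)
        _ = 2 * K := by ring
  set mi : Fin d → ℤ := fun i => C.inf' hCne (fun x => x i) with hmi
  have hbox : C ⊆ Finset.Icc mi (fun i => mi i + 2 * K) := by
    intro x hx
    rw [Finset.mem_Icc]
    constructor
    · intro i; exact Finset.inf'_le _ hx
    · intro i
      obtain ⟨y, hy, hyi⟩ := Finset.exists_mem_eq_inf' hCne (fun x => x i)
      have h1 := habs x hx y hy i
      have h2 := le_abs_self (x i - y i)
      simp only [hmi, hyi]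
      linarith
  have hcard : (2 * n : ℕ) ≤ (2 * K + 1).toNat ^ d := by
    have h1 : C.card = 2 * n := by
      rw [hC, Finset.card_union_of_disjoint hAB, hA, hB]; ring
    have h2 := Finset.card_le_card hbox
    rw [h1] at h2
    calc 2 * n ≤ (Finset.Icc mi (fun i => mi i + 2 * K)).card := h2
      _ = ∏ i : Fin d, (Finset.Icc (mi i) (mi i + 2 * K)).card := Pi.card_Icc _ _
      _ = ∏ _i : Fin d, (2 * K + 1).toNat := by
          apply Finset.prod_congr rfl; intro i _
          rw [Int.card_Icc]; congr 1; ring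
      _ = (2 * K + 1).toNat ^ d := by
          rw [Finset.prod_const, Finset.card_univ, Fintype.card_fin]
  have hKr : (0 : ℝ) ≤ (2 * K + 1 : ℤ) := by
    have : (0:ℤ) ≤ 2 * K + 1 := by linarith
    exact_mod_cast this
  have hpow : (2 * n : ℝ) ≤ ((2 * K + 1 : ℤ) : ℝ) ^ d := by
    have : ((2 * n : ℕ) : ℝ) ≤ (((2 * K + 1).toNat : ℤ) : ℝ) ^ d := by
      exact_mod_cast hcard
    rw [Int.toNat_of_nonneg (by linarith : (0:ℤ) ≤ 2 * K + 1)] at this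
    calc (2 * n : ℝ) = ((2 * n : ℕ) : ℝ) := by push_cast; ring
      _ ≤ _ := this
  have hroot : ((2 * n : ℝ)) ^ ((1 : ℝ) / d) ≤ ((2 * K + 1 : ℤ) : ℝ) := by
    have h2n : (0 : ℝ) ≤ 2 * n := by positivity
    have hstep : ((2 * n : ℝ)) ^ ((1 : ℝ) / d) ≤
        (((2 * K + 1 : ℤ) : ℝ) ^ d) ^ ((1 : ℝ) / d) :=
      Real.rpow_le_rpow h2n hpow (by positivity)
    calc ((2 * n : ℝ)) ^ ((1 : ℝ) / d) ≤ _ := hstep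
      _ = ((2 * K + 1 : ℤ) : ℝ) := by
          rw [← Real.rpow_natCast ((2 * K + 1 : ℤ) : ℝ) d, ← Real.rpow_mul hKr]
          rw [mul_one_div, div_self (by exact_mod_cast hd.ne' : (d : ℝ) ≠ 0),
            Real.rpow_one]
  have hm : (⌈((2 * n : ℝ)) ^ ((1 : ℝ) / d)⌉ : ℤ) ≤ 2 * K + 1 :=
    Int.ceil_le.mpr hroot
  have hfin : (⌈(⌈((2 * n : ℝ)) ^ ((1 : ℝ) / d)⌉ : ℝ) / 2⌉ : ℤ) ≤ K + 1 := by
    apply Int.ceil_le.mpr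
    rw [div_le_iff₀ (by norm_num : (0:ℝ) < 2)]
    have : ((⌈((2 * n : ℝ)) ^ ((1 : ℝ) / d)⌉ : ℤ) : ℝ) ≤ ((2 * K + 1 : ℤ) : ℝ) := by
      exact_mod_cast hm
    push_cast at this ⊢
    linarith
  linarith
end

section
/- Let t_1, ..., t_m be random variables where each t_i is a sum of k_i independent exponentially distributed random variables with rates λ_{i,j} ≥ λ > 0, and let k = max_i k_i and T = max(t_1, ..., t_m). Then E[T] = O((k + log m)/λ), i.e., there is a universal constant C such that E[T] ≤ C(k + log m)/λ. -/
open MeasureTheory ProbabilityTheory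

/-- `X` is an exponentially distributed random variable with rate `r` on `(Ω, μ)`. -/
def IsExpRV {Ω : Type*} [MeasurableSpace Ω] (μ : Measure Ω) (r : ℝ) (X : Ω → ℝ) : Prop :=
  Measurable X ∧ μ.map X = ProbabilityTheory.expMeasure r

open Real Set

lemma expMeasure_eq' (r : ℝ) :
    expMeasure r = MeasureTheory.volume.withDensity (exponentialPDF r) := rfl

lemma lintegral_exp_expMeasure {r θ : ℝ} (hθ : 0 ≤ θ) (h : θ < r) :
    ∫⁻ x, ENNReal.ofReal (Real.exp (θ * x)) ∂(expMeasure r) =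
      ENNReal.ofReal (r / (r - θ)) := by
  have hr : 0 < r := lt_of_le_of_lt hθ h
  set b := r - θ with hbdef
  have hb : 0 < b := sub_pos.mpr h
  have hmeas : Measurable fun x : ℝ => ENNReal.ofReal (Real.exp (θ * x)) :=
    (measurable_const.mul measurable_id).exp.ennreal_ofReal
  rw [expMeasure_eq', lintegral_withDensity_eq_lintegral_mul _ (show Measurable (exponentialPDF r) from (measurable_exponentialPDFReal r).ennreal_ofReal) hmeas]
  have hstep : ∫⁻ x, (exponentialPDF r * fun x => ENNReal.ofReal (Real.exp (θ * x))) x =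
      ∫⁻ x in Ici (0:ℝ), ENNReal.ofReal (r * Real.exp (-b * x)) := by
    rw [← lintegral_indicator measurableSet_Ici]
    refine lintegral_congr fun x => ?_
    by_cases hx : (0:ℝ) ≤ x
    · rw [Pi.mul_apply, exponentialPDF_of_nonneg hx, Set.indicator_of_mem (Set.mem_Ici.mpr hx),
        ← ENNReal.ofReal_mul (by positivity)]
      congr 1
      rw [mul_assoc, ← Real.exp_add]
      rw [hbdef]
      ring_nf
    · rw [Pi.mul_apply, exponentialPDF_of_neg (not_le.mp hx), zero_mul,
        Set.indicator_of_notMem (by simpa using hx)]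
  rw [hstep, Measure.restrict_congr_set Ioi_ae_eq_Ici.symm]
  have hInt : IntegrableOn (fun x => r * Real.exp (-b * x)) (Ioi (0:ℝ)) :=
    (exp_neg_integrableOn_Ioi 0 hb).const_mul r
  rw [← ofReal_integral_eq_lintegral_ofReal hInt
      (Filter.Eventually.of_forall fun x => by positivity)]
  congr 1
  rw [MeasureTheory.integral_const_mul]
  have : ∫ x in Ioi (0:ℝ), Real.exp (-b * x) = b⁻¹ := by
    have := integral_comp_mul_left_Ioi (fun y => Real.exp (-y)) 0 hb
    simp only [mul_zero, integral_exp_neg_Ioi, neg_zero, Real.exp_zero, smul_eq_mul,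
      mul_one] at this
    rw [← this]
    congr 1
    funext x
    ring_nf
  rw [this, div_eq_mul_inv]


lemma IsExpRV.ae_nonneg {Ω : Type*} [MeasurableSpace Ω] {μ : Measure Ω} {r : ℝ} {X : Ω → ℝ}
    (hX : IsExpRV μ r X) : ∀ᵐ ω ∂μ, 0 ≤ X ω := by
  rw [ae_iff]
  have : {ω | ¬ 0 ≤ X ω} = X ⁻¹' (Iio 0) := by ext ω; simp [not_le]
  rw [this, ← Measure.map_apply hX.1 measurableSet_Iio, hX.2, expMeasure_eq',
    withDensity_apply _ measurableSet_Iio]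
  simpa using lintegral_exponentialPDF_of_nonpos (le_refl (0:ℝ)) (r := r)

lemma IsExpRV.integrable_exp {Ω : Type*} [MeasurableSpace Ω] {μ : Measure Ω} {r θ : ℝ}
    (hθ : 0 ≤ θ) (h : θ < r) {X : Ω → ℝ} (hX : IsExpRV μ r X) :
    Integrable (fun ω => Real.exp (θ * X ω)) μ := by
  have hlint : ∫⁻ ω, ENNReal.ofReal (Real.exp (θ * X ω)) ∂μ = ENNReal.ofReal (r / (r - θ)) := by
    rw [← lintegral_map (f := fun x : ℝ => ENNReal.ofReal (Real.exp (θ * x))) ((measurable_const.mul measurable_id).exp.ennreal_ofReal) hX.1, hX.2]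
    exact lintegral_exp_expMeasure hθ h
  refine ⟨((measurable_const.mul hX.1).exp).aestronglyMeasurable, ?_⟩
  rw [hasFiniteIntegral_iff_ofReal (Filter.Eventually.of_forall fun ω => (Real.exp_pos _).le)]
  rw [hlint]
  exact ENNReal.ofReal_lt_top

lemma IsExpRV.integral_exp {Ω : Type*} [MeasurableSpace Ω] {μ : Measure Ω} {r θ : ℝ}
    (hθ : 0 ≤ θ) (h : θ < r) {X : Ω → ℝ} (hX : IsExpRV μ r X) :
    ∫ ω, Real.exp (θ * X ω) ∂μ = r / (r - θ) := by
  have hr : 0 < r := lt_of_le_of_lt hθ h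
  have hlint : ∫⁻ ω, ENNReal.ofReal (Real.exp (θ * X ω)) ∂μ = ENNReal.ofReal (r / (r - θ)) := by
    rw [← lintegral_map (f := fun x : ℝ => ENNReal.ofReal (Real.exp (θ * x))) ((measurable_const.mul measurable_id).exp.ennreal_ofReal) hX.1, hX.2]
    exact lintegral_exp_expMeasure hθ h
  rw [integral_eq_lintegral_of_nonneg_ae (f := fun ω => Real.exp (θ * X ω)) (Filter.Eventually.of_forall fun ω => (Real.exp_pos _).le)
    ((measurable_const.mul hX.1 : Measurable fun ω => θ * X ω).exp).aestronglyMeasurable, hlint,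
    ENNReal.toReal_ofReal (by have hb : 0 < r - θ := sub_pos.mpr h; positivity)]


/-- There is a universal constant `C` such that: if `t_1, …, t_m` are random variables,
each `t_i` a sum of `k_i` independent exponentially distributed random variables with rates
`lamf i j ≥ lam > 0`, `k = max_i k_i`, and `T = max_i t_i`, then
`E[T] ≤ C * (k + log m) / lam`. -/
theorem max_of_sums_of_exponentials_upper :
    ∃ C : ℝ, 0 < C ∧
      ∀ (Ω : Type) [MeasurableSpace Ω] (μ : Measure Ω), IsProbabilityMeasure μ →
        ∀ (m : ℕ) (hm : 0 < m) (kf : Fin m → ℕ) (k : ℕ), k = Finset.univ.sup kf →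
          ∀ (lam : ℝ), 0 < lam →
            ∀ (lamf : (i : Fin m) → Fin (kf i) → ℝ), (∀ i j, lam ≤ lamf i j) →
              ∀ (e : (i : Fin m) → Fin (kf i) → Ω → ℝ),
                (∀ i j, IsExpRV μ (lamf i j) (e i j)) →
                iIndepFun
                  (fun p : Σ i : Fin m, Fin (kf i) => e p.1 p.2) μ →
                ∫ ω, (Finset.univ.sup'
                    (Finset.univ_nonempty_iff.mpr ⟨⟨0, hm⟩⟩)
                    (fun i : Fin m => ∑ j, e i j ω)) ∂μ ≤
                  C * ((k : ℝ) + Real.log m) / lam := by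
  refine ⟨2, by norm_num, ?_⟩
  intro Ω _ μ hμ m hm kf k hk lam hlam lamf hlamf e hExp hIndep
  set θ := lam / 2 with hθdef
  have hθ : 0 < θ := by positivity
  have hθr : ∀ i j, θ < lamf i j := fun i j => lt_of_lt_of_le (by rw [hθdef]; linarith) (hlamf i j)
  have hmeas : ∀ i j, Measurable (e i j) := fun i j => (hExp i j).1
  have hne : (Finset.univ : Finset (Fin m)).Nonempty := Finset.univ_nonempty_iff.mpr ⟨⟨0, hm⟩⟩
  set T : Ω → ℝ := fun ω => Finset.univ.sup' hne (fun i : Fin m => ∑ j, e i j ω) with hTdef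
  set X : (Σ i : Fin m, Fin (kf i)) → Ω → ℝ := fun p => e p.1 p.2 with hXdef
  have hXmeas : ∀ p, Measurable (X p) := fun p => hmeas p.1 p.2
  have hinj : ∀ i : Fin m, Function.Injective
      (fun j : Fin (kf i) => (⟨i, j⟩ : Σ i' : Fin m, Fin (kf i'))) :=
    fun i a b h => by simpa using h
  let emb : (i : Fin m) → (Fin (kf i) ↪ Σ i, Fin (kf i)) :=
    fun i => ⟨fun j => ⟨i, j⟩, hinj i⟩
  have hsum : ∀ (i : Fin m) (ω : Ω),
      (∑ p ∈ Finset.univ.map (emb i), X p) ω = ∑ j, e i j ω := by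
    intro i ω
    rw [Finset.sum_apply, Finset.sum_map]
    rfl
  -- integrability of exp (θ * t_i)
  have hti_int : ∀ i, Integrable (fun ω => Real.exp (θ * ∑ j, e i j ω)) μ := by
    intro i
    have h := hIndep.integrable_exp_mul_sum (t := θ) hXmeas
      (s := Finset.univ.map (emb i))
      (fun p _ => (hExp p.1 p.2).integrable_exp hθ.le (hθr p.1 p.2))
    simpa only [hsum] using h
  -- each mgf at θ is at most 2
  have hmgf2 : ∀ i j, mgf (e i j) μ θ ≤ 2 := by
    intro i j
    have hEq : mgf (e i j) μ θ = lamf i j / (lamf i j - θ) :=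
      (hExp i j).integral_exp hθ.le (hθr i j)
    rw [hEq, div_le_iff₀ (by linarith [hθr i j])]
    have h1 := hlamf i j
    rw [hθdef] at *
    linarith
  -- mgf of t_i bounded by 2 ^ k
  have hprod : ∀ i, ∫ ω, Real.exp (θ * ∑ j, e i j ω) ∂μ ≤ 2 ^ k := by
    intro i
    have hkfi : kf i ≤ k := hk ▸ Finset.le_sup (Finset.mem_univ i)
    have hmg := hIndep.mgf_sum (t := θ) hXmeas (Finset.univ.map (emb i))
    have hmg' : (∫ ω, Real.exp (θ * ∑ j, e i j ω) ∂μ)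
        = ∏ j : Fin (kf i), mgf (e i j) μ θ := by
      have h2 : mgf (∑ p ∈ Finset.univ.map (emb i), X p) μ θ
          = ∫ ω, Real.exp (θ * ∑ j, e i j ω) ∂μ :=
        integral_congr_ae (Filter.Eventually.of_forall fun ω => by simp only [hsum])
      rw [← h2, hmg, Finset.prod_map]
      rfl
    rw [hmg']
    calc (∏ j : Fin (kf i), mgf (e i j) μ θ) ≤ ∏ _j : Fin (kf i), (2:ℝ) :=
          Finset.prod_le_prod (fun j _ => mgf_nonneg) (fun j _ => hmgf2 i j)
      _ = 2 ^ (kf i) := by simp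
      _ ≤ 2 ^ k := pow_le_pow_right₀ one_le_two hkfi
  -- measurability of T
  have hT_meas : Measurable T := by
    have h := Finset.measurable_sup' hne (f := fun (i : Fin m) (ω : Ω) => ∑ j, e i j ω)
      (fun i _ => Finset.measurable_sum _ fun j _ => hmeas i j)
    have heq : T = Finset.univ.sup' hne (fun (i : Fin m) (ω : Ω) => ∑ j, e i j ω) := by
      funext ω
      simp only [hTdef, Finset.sup'_apply]
    rw [heq]
    exact h
  -- pointwise bound on exp (θ * T)
  have hTle : ∀ ω, Real.exp (θ * T ω) ≤ ∑ i, Real.exp (θ * ∑ j, e i j ω) := by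
    intro ω
    obtain ⟨i0, -, h0⟩ := Finset.exists_mem_eq_sup' hne (fun i : Fin m => ∑ j, e i j ω)
    have : T ω = ∑ j, e i0 j ω := h0
    rw [this]
    exact Finset.single_le_sum (f := fun i => Real.exp (θ * ∑ j, e i j ω))
      (fun i _ => (Real.exp_pos _).le) (Finset.mem_univ i0)
  have hS_int : Integrable (fun ω => ∑ i, Real.exp (θ * ∑ j, e i j ω)) μ :=
    integrable_finset_sum _ fun i _ => hti_int i
  have hexpT_int : Integrable (fun ω => Real.exp (θ * T ω)) μ := by
    refine hS_int.mono' ((hT_meas.const_mul θ).exp.aestronglyMeasurable) ?_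
    exact Filter.Eventually.of_forall fun ω => by
      rw [Real.norm_eq_abs, abs_of_pos (Real.exp_pos _)]; exact hTle ω
  -- T is a.e. nonnegative
  have hT_nonneg : ∀ᵐ ω ∂μ, 0 ≤ T ω := by
    have h0 : ∀ᵐ ω ∂μ, ∀ j : Fin (kf ⟨0, hm⟩), 0 ≤ e ⟨0, hm⟩ j ω :=
      ae_all_iff.mpr fun j => (hExp _ j).ae_nonneg
    filter_upwards [h0] with ω hω
    calc (0:ℝ) ≤ ∑ j, e ⟨0, hm⟩ j ω := Finset.sum_nonneg fun j _ => hω j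
      _ ≤ T ω := Finset.le_sup' (fun i : Fin m => ∑ j, e i j ω) (Finset.mem_univ ⟨0, hm⟩)
  -- T is integrable
  have hT_int : Integrable T μ := by
    refine (hexpT_int.const_mul θ⁻¹).mono' hT_meas.aestronglyMeasurable ?_
    filter_upwards [hT_nonneg] with ω hω
    rw [Real.norm_eq_abs, abs_of_nonneg hω]
    have h1 : θ * T ω ≤ Real.exp (θ * T ω) := by
      have := Real.add_one_le_exp (θ * T ω); linarith
    calc T ω = θ⁻¹ * (θ * T ω) := by field_simp
      _ ≤ θ⁻¹ * Real.exp (θ * T ω) := mul_le_mul_of_nonneg_left h1 (inv_nonneg.mpr hθ.le)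
  -- Jensen
  have hJen : Real.exp (θ * ∫ ω, T ω ∂μ) ≤ ∫ ω, Real.exp (θ * T ω) ∂μ := by
    have h := convexOn_exp.map_integral_le (μ := μ) (f := fun ω => θ * T ω)
      Real.continuous_exp.continuousOn isClosed_univ
      (Filter.Eventually.of_forall fun ω => Set.mem_univ _)
      (hT_int.const_mul θ) (by exact hexpT_int)
    rwa [integral_const_mul] at h
  have hsum_le : ∫ ω, Real.exp (θ * T ω) ∂μ ≤ (m : ℝ) * 2 ^ k := by
    calc ∫ ω, Real.exp (θ * T ω) ∂μ ≤ ∫ ω, ∑ i, Real.exp (θ * ∑ j, e i j ω) ∂μ :=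
          integral_mono hexpT_int hS_int hTle
      _ = ∑ i, ∫ ω, Real.exp (θ * ∑ j, e i j ω) ∂μ :=
          integral_finset_sum _ (fun i _ => hti_int i)
      _ ≤ ∑ _i : Fin m, (2:ℝ) ^ k := Finset.sum_le_sum fun i _ => hprod i
      _ = (m : ℝ) * 2 ^ k := by simp [Finset.sum_const, Finset.card_univ, nsmul_eq_mul]
  have hm1 : (1:ℝ) ≤ (m:ℝ) := by exact_mod_cast hm
  have hpos : (0:ℝ) < (m:ℝ) * 2 ^ k := by positivity
  have hkey : θ * ∫ ω, T ω ∂μ ≤ Real.log ((m:ℝ) * 2 ^ k) := by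
    rw [Real.le_log_iff_exp_le hpos]
    exact hJen.trans hsum_le
  have hlog : Real.log ((m:ℝ) * 2 ^ k) = Real.log m + k * Real.log 2 := by
    rw [Real.log_mul (by positivity) (by positivity), Real.log_pow]
  have hlogm : 0 ≤ Real.log (m:ℝ) := Real.log_nonneg hm1
  have hlog2 : Real.log 2 ≤ 1 := by
    have := Real.log_le_sub_one_of_pos (by norm_num : (0:ℝ) < 2)
    linarith
  have hk2 : (k:ℝ) * Real.log 2 ≤ (k:ℝ) := by
    calc (k:ℝ) * Real.log 2 ≤ (k:ℝ) * 1 :=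
          mul_le_mul_of_nonneg_left hlog2 (Nat.cast_nonneg k)
      _ = (k:ℝ) := mul_one _
  show ∫ ω, T ω ∂μ ≤ 2 * ((k : ℝ) + Real.log m) / lam
  rw [le_div_iff₀ hlam]
  have heq : (∫ ω, T ω ∂μ) * lam = 2 * (θ * ∫ ω, T ω ∂μ) := by rw [hθdef]; ring
  rw [heq]
  rw [hlog] at hkey
  linarith
end

section
/- Let t_1, ..., t_m be as above with all rates λ_{i,j} ≤ λ' and k = max_i k_i, T = max_i t_i. Then E[T] = Ω((k + log m)/λ'), i.e., there exists a universal constant c > 0 with E[T] ≥ c(k + log m)/λ'. -/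
open MeasureTheory ProbabilityTheory

section ExpRV

variable {Ω : Type*} [MeasurableSpace Ω] {μ : Measure Ω} [IsProbabilityMeasure μ]
  {r : ℝ} {X : Ω → ℝ}

lemma expMeasure_Iic (hr : 0 < r) {x : ℝ} (hx : 0 ≤ x) :
    expMeasure r (Set.Iic x) = ENNReal.ofReal (1 - Real.exp (-(r * x))) := by
  have : IsProbabilityMeasure (expMeasure r) := isProbabilityMeasure_expMeasure hr
  have h1 : ProbabilityTheory.cdf (expMeasure r) x = (expMeasure r (Set.Iic x)).toReal :=
    cdf_eq_real _ x
  have h2 : ProbabilityTheory.cdf (expMeasure r) x = 1 - Real.exp (-(r * x)) := by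
    have := cdf_expMeasure_eq hr x
    rw [this, if_pos hx]
  rw [← ENNReal.ofReal_toReal (measure_ne_top (expMeasure r) (Set.Iic x)), ← h1, h2]

lemma IsExpRV.measure_Iic (hX : IsExpRV μ r X) (hr : 0 < r) {x : ℝ} (hx : 0 ≤ x) :
    μ (X ⁻¹' Set.Iic x) = ENNReal.ofReal (1 - Real.exp (-(r * x))) := by
  rw [← Measure.map_apply hX.1 measurableSet_Iic, hX.2, expMeasure_Iic hr hx]

lemma IsExpRV.ae_nonneg_s5 (hX : IsExpRV μ r X) (hr : 0 < r) : 0 ≤ᵐ[μ] X := by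
  have h0 : μ (X ⁻¹' Set.Iic 0) = 0 := by
    rw [hX.measure_Iic hr le_rfl]
    simp
  refine measure_mono_null (fun ω hω => ?_) h0
  simp only [Set.mem_setOf_eq, Set.mem_preimage, Set.mem_Iic] at *
  exact le_of_not_ge hω

lemma IsExpRV.measure_Ioi (hX : IsExpRV μ r X) (hr : 0 < r) {x : ℝ} (hx : 0 ≤ x) :
    μ (X ⁻¹' Set.Ioi x) = ENNReal.ofReal (Real.exp (-(r * x))) := by
  have hms : MeasurableSet (X ⁻¹' Set.Iic x) := hX.1 measurableSet_Iic
  have hc : X ⁻¹' Set.Ioi x = (X ⁻¹' Set.Iic x)ᶜ := by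
    ext ω; simp [not_le]
  have hle : Real.exp (-(r * x)) ≤ 1 := by
    rw [Real.exp_le_one_iff]
    simp [mul_nonneg hr.le hx]
  rw [hc, prob_compl_eq_one_sub hms, hX.measure_Iic hr hx, ← ENNReal.ofReal_one,
    ← ENNReal.ofReal_sub 1 (sub_nonneg.mpr hle)]
  congr 1
  ring

lemma IsExpRV.integrable (hX : IsExpRV μ r X) (hr : 0 < r) : Integrable X μ := by
  have hmap : Integrable (id : ℝ → ℝ) (μ.map X) → Integrable X μ := by
    intro h
    exact (integrable_map_measure aestronglyMeasurable_id hX.1.aemeasurable).mp h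
  apply hmap
  rw [hX.2]
  show Integrable id (gammaMeasure 1 r)
  rw [gammaMeasure]
  have hmeas : Measurable (gammaPDF 1 r) := (measurable_gammaPDFReal 1 r).ennreal_ofReal
  rw [integrable_withDensity_iff hmeas (ae_of_all _ fun x => ENNReal.ofReal_lt_top)]
  have hpdf : ∀ x : ℝ, ((gammaPDF 1 r x).toReal : ℝ)
      = if 0 ≤ x then r * Real.exp (-(r * x)) else 0 := by
    intro x
    rw [show gammaPDF 1 r x = exponentialPDF r x from rfl, exponentialPDF_eq]
    split_ifs with h
    · rw [ENNReal.toReal_ofReal (by positivity)]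
    · simp
  have base := integrableOn_rpow_mul_exp_neg_mul_rpow (by norm_num : (-1:ℝ) < 1) (by norm_num : (0:ℝ) < 1) hr
  have key : Integrable (fun x : ℝ => x * (if 0 ≤ x then r * Real.exp (-(r * x)) else 0)) := by
    rw [← integrableOn_univ, ← Set.Iic_union_Ioi (a := (0:ℝ))]
    apply IntegrableOn.union
    · rw [integrableOn_congr_fun (g := fun _ => (0:ℝ)) ?_ measurableSet_Iic]
      · exact integrableOn_zero
      · intro x hx
        rcases lt_or_eq_of_le (Set.mem_Iic.mp hx) with h | h
        · simp [not_le.mpr h]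
        · simp [h]
    · rw [integrableOn_congr_fun
        (g := fun x : ℝ => r * (x ^ (1:ℝ) * Real.exp (-r * x ^ (1:ℝ)))) ?_ measurableSet_Ioi]
      · exact base.const_mul r
      · intro x hx
        have hx' : (0:ℝ) ≤ x := le_of_lt hx
        simp only [if_pos hx', Real.rpow_one]
        ring
  apply key.congr
  filter_upwards with x
  rw [hpdf x]
  simp [id]

lemma IsExpRV.mul_exp_le_integral (hX : IsExpRV μ r X) (hr : 0 < r) {a : ℝ} (ha : 0 ≤ a) :
    a * Real.exp (-(r * a)) ≤ ∫ ω, X ω ∂μ := by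
  have hint := hX.integrable hr
  have hs : MeasurableSet (X ⁻¹' Set.Ioi a) := hX.1 measurableSet_Ioi
  have h1 : a * (μ (X ⁻¹' Set.Ioi a)).toReal ≤ ∫ ω in X ⁻¹' Set.Ioi a, X ω ∂μ :=
    setIntegral_ge_of_const_le_real hs (measure_ne_top μ _)
      (fun ω hω => le_of_lt (Set.mem_Ioi.mp hω)) hint.integrableOn
  have h2 : ∫ ω in X ⁻¹' Set.Ioi a, X ω ∂μ ≤ ∫ ω, X ω ∂μ := setIntegral_le_integral hint (hX.ae_nonneg_s5 hr)
  rw [hX.measure_Ioi hr ha, ENNReal.toReal_ofReal (Real.exp_nonneg _)] at h1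
  exact h1.trans h2

end ExpRV

/-- There is a universal constant `c > 0` such that: if `t_1, …, t_m` are random variables,
each `t_i` a sum of `k_i ≥ 1` independent exponentially distributed random variables with
rates `lamf i j ≤ lam'`, `k = max_i k_i`, and `T = max_i t_i`, then
`E[T] ≥ c * (k + log m) / lam'`. -/
theorem max_of_sums_of_exponentials_lower :
    ∃ c : ℝ, 0 < c ∧
      ∀ (Ω : Type) [MeasurableSpace Ω] (μ : Measure Ω), IsProbabilityMeasure μ →
        ∀ (m : ℕ) (hm : 0 < m) (kf : Fin m → ℕ), (∀ i, 0 < kf i) →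
          ∀ (k : ℕ), k = Finset.univ.sup kf →
          ∀ (lam' : ℝ), 0 < lam' →
            ∀ (lamf : (i : Fin m) → Fin (kf i) → ℝ),
              (∀ i j, 0 < lamf i j) → (∀ i j, lamf i j ≤ lam') →
              ∀ (e : (i : Fin m) → Fin (kf i) → Ω → ℝ),
                (∀ i j, IsExpRV μ (lamf i j) (e i j)) →
                iIndepFun
                  (fun p : Σ i : Fin m, Fin (kf i) => e p.1 p.2) μ →
                c * ((k : ℝ) + Real.log m) / lam' ≤
                  ∫ ω, (Finset.univ.sup'
                    (Finset.univ_nonempty_iff.mpr ⟨⟨0, hm⟩⟩)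
                    (fun i : Fin m => ∑ j, e i j ω)) ∂μ := by
  
  refine ⟨1/6, by norm_num, ?_⟩
  intro Ω _ μ hμ m hm kf hkf k hk lam' hlam' lamf hlamf hle e he hIndep
  haveI := hμ
  have hne : (Finset.univ : Finset (Fin m)).Nonempty := Finset.univ_nonempty_iff.mpr ⟨⟨0, hm⟩⟩
  set T : Ω → ℝ := fun ω => Finset.univ.sup' hne (fun i : Fin m => ∑ j, e i j ω) with hT
  show (1:ℝ)/6 * ((k : ℝ) + Real.log m) / lam' ≤ ∫ ω, T ω ∂μ
  -- basic facts
  have hInt : ∀ i j, Integrable (e i j) μ := fun i j => (he i j).integrable (hlamf i j)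
  have h0 : ∀ᵐ ω ∂μ, ∀ i j, 0 ≤ e i j ω := by
    rw [ae_all_iff]; intro i; rw [ae_all_iff]; intro j; exact (he i j).ae_nonneg_s5 (hlamf i j)
  have htInt : ∀ i, Integrable (fun ω => ∑ j, e i j ω) μ :=
    fun i => integrable_finset_sum _ fun j _ => hInt i j
  have hTmeas : Measurable T := by
    have := Finset.measurable_sup' (α := ℝ) (δ := Ω) hne
      (f := fun (i : Fin m) (ω : Ω) => ∑ j, e i j ω)
      (fun i _ => Finset.measurable_sum _ fun j _ => (he i j).1)
    have heq : T = Finset.univ.sup' hne (fun (i : Fin m) (ω : Ω) => ∑ j, e i j ω) := by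
      funext ω
      rw [hT]
      exact (Finset.sup'_apply (f := fun (i : Fin m) (ω : Ω) => ∑ j, e i j ω) hne ω).symm
    rw [heq]
    exact this
  have hTge : ∀ i ω, (∑ j, e i j ω) ≤ T ω := fun i ω =>
    Finset.le_sup' (fun i : Fin m => ∑ j, e i j ω) (Finset.mem_univ i)
  have hTInt : Integrable T μ := by
    have hg : Integrable (fun ω => ∑ i, |∑ j, e i j ω|) μ :=
      integrable_finset_sum _ fun i _ => (htInt i).abs
    refine hg.mono' hTmeas.aestronglyMeasurable ?_
    filter_upwards with ω
    rw [Real.norm_eq_abs, abs_le]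
    constructor
    · have h1 : |∑ j, e ⟨0, hm⟩ j ω| ≤ ∑ i, |∑ j, e i j ω| :=
        Finset.single_le_sum (f := fun i : Fin m => |∑ j, e i j ω|)
          (fun i _ => abs_nonneg _) (Finset.mem_univ (⟨0, hm⟩ : Fin m))
      have h2 := hTge ⟨0, hm⟩ ω
      have h3 := neg_abs_le (∑ j, e (⟨0, hm⟩ : Fin m) j ω)
      linarith
    · exact Finset.sup'_le _ _ fun i _ => le_trans (le_abs_self _)
        (Finset.single_le_sum (f := fun i : Fin m => |∑ j, e i j ω|)
          (fun i _ => abs_nonneg _) (Finset.mem_univ i))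
  have hTnonneg : 0 ≤ᵐ[μ] T := by
    filter_upwards [h0] with ω hω
    exact le_trans (Finset.sum_nonneg fun j _ => hω ⟨0, hm⟩ j) (hTge ⟨0, hm⟩ ω)
  -- exp(-1) facts
  have hexpmul : Real.exp (-1) * Real.exp 1 = 1 := by rw [← Real.exp_add]; norm_num
  have hexp3 : (1:ℝ)/3 ≤ Real.exp (-1) := by
    nlinarith [Real.exp_one_lt_d9, Real.exp_pos (-1)]
  have hexp2 : Real.exp (-1) ≤ 1/2 := by
    nlinarith [Real.exp_one_gt_d9, Real.exp_pos (-1)]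
  -- Part 1 : k / (3 lam') ≤ E[T]
  have hpart1 : (k:ℝ)/(3*lam') ≤ ∫ ω, T ω ∂μ := by
    obtain ⟨i0, -, hi0⟩ := Finset.exists_mem_eq_sup Finset.univ hne kf
    have hk1 : ∀ j : Fin (kf i0), (1:ℝ)/(3*lam') ≤ ∫ ω, e i0 j ω ∂μ := by
      intro j
      have hb := (he i0 j).mul_exp_le_integral (hlamf i0 j) (a := 1/lam') (by positivity)
      have hx : -(1:ℝ) ≤ -(lamf i0 j * (1/lam')) := by
        have h1 : lamf i0 j * (1/lam') ≤ 1 := by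
          rw [mul_one_div, div_le_one hlam']; exact hle i0 j
        linarith
      have hexp : Real.exp (-1) ≤ Real.exp (-(lamf i0 j * (1/lam'))) := Real.exp_le_exp.mpr hx
      calc (1:ℝ)/(3*lam') = (1/lam') * (1/3) := by ring
        _ ≤ (1/lam') * Real.exp (-1) := mul_le_mul_of_nonneg_left hexp3 (by positivity)
        _ ≤ (1/lam') * Real.exp (-(lamf i0 j * (1/lam'))) :=
            mul_le_mul_of_nonneg_left hexp (by positivity)
        _ ≤ ∫ ω, e i0 j ω ∂μ := hb
    have hsum : (kf i0 : ℝ) * ((1:ℝ)/(3*lam')) ≤ ∫ ω, (∑ j, e i0 j ω) ∂μ := by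
      rw [integral_finset_sum _ (fun j _ => hInt i0 j)]
      calc (kf i0 : ℝ) * ((1:ℝ)/(3*lam')) = ∑ _j : Fin (kf i0), (1:ℝ)/(3*lam') := by
            simp [Finset.sum_const, Finset.card_univ, nsmul_eq_mul]
        _ ≤ ∑ j, ∫ ω, e i0 j ω ∂μ := Finset.sum_le_sum fun j _ => hk1 j
    have hTi : ∫ ω, (∑ j, e i0 j ω) ∂μ ≤ ∫ ω, T ω ∂μ :=
      integral_mono (htInt i0) hTInt (fun ω => hTge i0 ω)
    have hkk : (k:ℝ) = (kf i0 : ℝ) := by exact_mod_cast congrArg Nat.cast (hk.trans hi0)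
    rw [hkk, div_eq_mul_one_div]
    exact le_trans hsum hTi
  -- Part 2 : log m / (2 lam') ≤ E[T]
  have hpart2 : Real.log m / (2*lam') ≤ ∫ ω, T ω ∂μ := by
    set a := Real.log m / lam' with haDef
    have hL : 0 ≤ Real.log m := Real.log_nonneg (Nat.one_le_cast.mpr hm)
    have ha : 0 ≤ a := by positivity
    have hm0 : (0:ℝ) < m := Nat.cast_pos.mpr hm
    have h1m : 0 ≤ 1 - 1/(m:ℝ) := by
      rw [sub_nonneg, div_le_one hm0]; exact Nat.one_le_cast.mpr hm
    have hfac : ∀ i : Fin m, μ ((e i ⟨0, hkf i⟩) ⁻¹' Set.Iic a) ≤ ENNReal.ofReal (1 - 1/m) := by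
      intro i
      rw [(he i ⟨0, hkf i⟩).measure_Iic (hlamf _ _) ha]
      apply ENNReal.ofReal_le_ofReal
      have h1 : lamf i ⟨0, hkf i⟩ * a ≤ lam' * a := mul_le_mul_of_nonneg_right (hle i _) ha
      have h2 : Real.exp (-(lam' * a)) ≤ Real.exp (-(lamf i ⟨0, hkf i⟩ * a)) :=
        Real.exp_le_exp.mpr (by linarith)
      have h3 : Real.exp (-(lam' * a)) = 1/m := by
        have hla : lam' * a = Real.log m := by rw [haDef]; field_simp
        rw [hla, Real.exp_neg, Real.exp_log hm0, one_div]
      linarith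
    have hprod := hIndep.measure_inter_preimage_eq_mul
      (Finset.univ.image (fun i : Fin m => (⟨i, ⟨0, hkf i⟩⟩ : Σ i : Fin m, Fin (kf i))))
      (sets := fun _ => Set.Iic a) (fun p _ => measurableSet_Iic)
    have hFinj : Function.Injective
        (fun i : Fin m => (⟨i, ⟨0, hkf i⟩⟩ : Σ i : Fin m, Fin (kf i))) :=
      fun i i' h => congrArg Sigma.fst h
    have hInter : (⋂ p ∈ Finset.univ.image
          (fun i : Fin m => (⟨i, ⟨0, hkf i⟩⟩ : Σ i : Fin m, Fin (kf i))),
          (fun p : Σ i : Fin m, Fin (kf i) => e p.1 p.2) p ⁻¹' Set.Iic a)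
        = ⋂ i : Fin m, (e i ⟨0, hkf i⟩) ⁻¹' Set.Iic a := by
      ext ω
      simp only [Set.mem_iInter, Finset.mem_image, Finset.mem_univ, true_and]
      constructor
      · intro h i; exact h _ ⟨i, rfl⟩
      · rintro h p ⟨i, rfl⟩; exact h i
    have hS : μ (⋂ i : Fin m, (e i ⟨0, hkf i⟩) ⁻¹' Set.Iic a)
        = ∏ i : Fin m, μ ((e i ⟨0, hkf i⟩) ⁻¹' Set.Iic a) := by
      rw [← hInter, hprod, Finset.prod_image (fun i _ i' _ h => hFinj h)]
    have hpow : (1 - 1/(m:ℝ))^m ≤ Real.exp (-1) := by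
      have ha1 : 1 - 1/(m:ℝ) ≤ Real.exp (-(1/(m:ℝ))) := by
        have := Real.add_one_le_exp (-(1/(m:ℝ))); linarith
      have h2 := pow_le_pow_left₀ h1m ha1 m
      have h3 : (Real.exp (-(1/(m:ℝ))))^m = Real.exp (-1) := by
        rw [← Real.exp_nat_mul]; congr 1; field_simp
      rwa [h3] at h2
    have hSle : μ (⋂ i : Fin m, (e i ⟨0, hkf i⟩) ⁻¹' Set.Iic a)
        ≤ ENNReal.ofReal (Real.exp (-1)) := by
      rw [hS]
      calc ∏ i : Fin m, μ ((e i ⟨0, hkf i⟩) ⁻¹' Set.Iic a)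
          ≤ ∏ _i : Fin m, ENNReal.ofReal (1 - 1/m) := Finset.prod_le_prod' (fun i _ => hfac i)
        _ = ENNReal.ofReal (1 - 1/m) ^ m := by
            simp [Finset.prod_const, Finset.card_univ]
        _ = ENNReal.ofReal ((1 - 1/m)^m) := by rw [ENNReal.ofReal_pow h1m]
        _ ≤ ENNReal.ofReal (Real.exp (-1)) := ENNReal.ofReal_le_ofReal hpow
    have hmsle : μ {ω | T ω ≤ a} ≤ ENNReal.ofReal (Real.exp (-1)) := by
      refine le_trans (measure_mono_ae ?_) hSle
      filter_upwards [h0] with ω hω hTω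
      refine Set.mem_iInter.mpr fun i => ?_
      show e i ⟨0, hkf i⟩ ω ≤ a
      have h1 : e i ⟨0, hkf i⟩ ω ≤ ∑ j, e i j ω :=
        Finset.single_le_sum (f := fun j => e i j ω) (fun j _ => hω i j) (Finset.mem_univ _)
      exact le_trans h1 (le_trans (hTge i ω) hTω)
    have hmeasTle : MeasurableSet {ω | T ω ≤ a} := measurableSet_le hTmeas measurable_const
    have hgt : ENNReal.ofReal (1 - Real.exp (-1)) ≤ μ {ω | a < T ω} := by
      have hcompl : {ω | a < T ω} = {ω | T ω ≤ a}ᶜ := by ext ω; simp [not_le]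
      rw [hcompl, prob_compl_eq_one_sub hmeasTle]
      have heq1 : ENNReal.ofReal (1 - Real.exp (-1)) = 1 - ENNReal.ofReal (Real.exp (-1)) := by
        rw [← ENNReal.ofReal_one, ← ENNReal.ofReal_sub _ (Real.exp_nonneg _)]
      rw [heq1]
      exact tsub_le_tsub_left hmsle 1
    have htail : 1 - Real.exp (-1) ≤ (μ {ω | a < T ω}).toReal := by
      have h1 := ENNReal.toReal_mono (measure_ne_top μ _) hgt
      rwa [ENNReal.toReal_ofReal (by linarith)] at h1
    have hsInt : a * (μ {ω | a < T ω}).toReal ≤ ∫ ω in {ω | a < T ω}, T ω ∂μ :=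
      setIntegral_ge_of_const_le_real (measurableSet_lt measurable_const hTmeas)
        (measure_ne_top μ _) (fun ω hω => le_of_lt hω) hTInt.integrableOn
    have h2 : ∫ ω in {ω | a < T ω}, T ω ∂μ ≤ ∫ ω, T ω ∂μ :=
      setIntegral_le_integral hTInt hTnonneg
    calc Real.log m / (2*lam') = a * (1/2) := by rw [haDef]; ring
      _ ≤ a * (1 - Real.exp (-1)) := mul_le_mul_of_nonneg_left (by linarith) ha
      _ ≤ a * (μ {ω | a < T ω}).toReal := mul_le_mul_of_nonneg_left htail ha
      _ ≤ ∫ ω in {ω | a < T ω}, T ω ∂μ := hsInt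
      _ ≤ ∫ ω, T ω ∂μ := h2
  -- combine
  have hL : 0 ≤ Real.log m := Real.log_nonneg (Nat.one_le_cast.mpr hm)
  rw [div_le_iff₀ hlam']
  rw [div_le_iff₀ (by positivity : (0:ℝ) < 3*lam')] at hpart1
  rw [div_le_iff₀ (by positivity : (0:ℝ) < 2*lam')] at hpart2
  have hk0 : (0:ℝ) ≤ (k:ℝ) := Nat.cast_nonneg k
  nlinarith [hpart1, hpart2]
end

section
/- Let a = a_n...a_1 and b = b_n...b_1 be n-bit numbers where, for fixed indices i > j: a_k = 0 for k > i and for k < j, a_k = 1 for j ≤ k < i, b_k = 0 for all k ≠ j, and a_i, b_j ∈ {0,1} are free. Then the (i+1)-st bit of a + b equals a_i AND b_j. -/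
lemma geom_ico' (j : ℕ) (hj : 1 ≤ j) : ∀ i, j ≤ i →
    ∑ k ∈ Finset.Ico j i, 2 ^ (k - 1) = 2 ^ (i - 1) - 2 ^ (j - 1) := by
  intro i
  induction i with
  | zero => intro h; omega
  | succ i ih =>
    intro h
    rcases Nat.lt_or_ge j (i+1) with hlt | hge
    · have hji' : j ≤ i := by omega
      rw [Finset.sum_Ico_succ_top hji', ih hji']
      clear ih
      have h1 : 2 ^ (j - 1) ≤ 2 ^ (i - 1) := Nat.pow_le_pow_right (by norm_num) (by omega)
      have e : i - 1 + 1 = i := by omega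
      have h4 : 2 ^ i = 2 ^ (i - 1) * 2 := by rw [← pow_succ, e]
      simp only [Nat.add_sub_cancel]
      omega
    · have : j = i + 1 := by omega
      subst this
      simp

/-- Let `a = a_n…a_1` and `b = b_n…b_1` be `n`-bit numbers (with `a = Σ_k a_k 2^(k-1)`)
where, for fixed indices `i > j ≥ 1`: `a_k = 0` for `k > i` and `k < j`, `a_k = 1` for
`j ≤ k < i`, `b_k = 0` for all `k ≠ j`, and the bits `ai = a_i` and `bj = b_j` are free.
Then the `(i+1)`-st bit of `a + b`, namely `⌊(a+b)/2^i⌋ mod 2`, equals `a_i AND b_j`. -/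
theorem addition_encodes_and (n i j : ℕ) (hj : 1 ≤ j) (hji : j < i) (hin : i ≤ n)
    (ai bj : ℕ) (hai : ai ≤ 1) (hbj : bj ≤ 1) :
    ((ai * 2 ^ (i - 1) + ∑ k ∈ Finset.Ico j i, 2 ^ (k - 1)) + bj * 2 ^ (j - 1)) / 2 ^ i % 2
      = ai * bj := by
  rw [geom_ico' j hj i (le_of_lt hji)]
  have h1 : 2 ^ (j - 1) ≤ 2 ^ (i - 1) := Nat.pow_le_pow_right (by norm_num) (by omega)
  have e : i - 1 + 1 = i := by omega
  have h4 : 2 ^ i = 2 ^ (i - 1) * 2 := by rw [← pow_succ, e]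
  have hpos : 0 < 2 ^ (j - 1) := Nat.pow_pos (by norm_num)
  interval_cases ai <;> interval_cases bj
  · rw [Nat.div_eq_of_lt (by omega)]
  · rw [Nat.div_eq_of_lt (by omega)]
  · rw [Nat.div_eq_of_lt (by omega)]
  · have h5 : 1 * 2 ^ (i - 1) + (2 ^ (i - 1) - 2 ^ (j - 1)) + 1 * 2 ^ (j - 1) = 2 ^ i := by
      omega
    rw [h5, Nat.div_self (by positivity)]
end

section
/- If f(n) denotes the minimum worst-case number of parallel tile-attachment steps over inputs, and the adder construction completes in at most 2k + 8 parallel steps where k is the length of the longest contiguous run of unequal addend-pairs (a_i ≠ b_i), then the expected number of parallel steps over uniformly random n-bit inputs A, B is O(log n), and the worst case is O(n). -/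
open scoped Classical in
/-- The length of the longest run of consecutive 1s among the `n` low-order bits of `N`. -/
noncomputable def longestRunOfOnes (n N : ℕ) : ℕ :=
  (Finset.range (n + 1)).sup fun l =>
    if ∃ i, i + l ≤ n ∧ ∀ j < l, N.testBit (i + j) = true then l else 0

/-- The length of the longest contiguous run of positions (among the low `n`) where the
bits of `A` and `B` differ, i.e. the longest run of 1s of the XOR of `A` and `B`. -/
noncomputable def longestDiffRun (n A B : ℕ) : ℕ := longestRunOfOnes n (A ^^^ B)

open Finset

lemma longestRun_le (n N : ℕ) : longestRunOfOnes n N ≤ n := by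
  classical
  apply Finset.sup_le
  intro l _
  split_ifs with h
  · obtain ⟨i, hi, -⟩ := h
    omega
  · exact Nat.zero_le _

lemma hasRun_of_le (n l N : ℕ) (hl : 0 < l) (h : l ≤ longestRunOfOnes n N) :
    ∃ i, i + l ≤ n ∧ ∀ j < l, N.testBit (i + j) = true := by
  classical
  rw [longestRunOfOnes, Finset.le_sup_iff hl] at h
  obtain ⟨l', _, hl'⟩ := h
  split_ifs at hl' with hc
  · obtain ⟨i, hi, hrun⟩ := hc
    exact ⟨i, by omega, fun j hj => hrun j (by omega)⟩
  · omega

/-- Counting numbers below `2^n` whose bits `i, …, i+l-1` are all one. -/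
lemma card_run_event (n l i : ℕ) (hil : i + l ≤ n) :
    ((Finset.range (2 ^ n)).filter
        (fun X => ∀ j < l, X.testBit (i + j) = true)).card ≤ 2 ^ (n - l) := by
  classical
  have key : ∀ X ∈ (Finset.range (2 ^ n)).filter
      (fun X => ∀ j < l, X.testBit (i + j) = true),
      X = X % 2 ^ i + 2 ^ i * (2 ^ l - 1) + 2 ^ (i + l) * (X / 2 ^ (i + l)) := by
    intro X hX
    simp only [Finset.mem_filter, Finset.mem_range] at hX
    have hmid : X / 2 ^ i % 2 ^ l = 2 ^ l - 1 := by
      apply Nat.eq_of_testBit_eq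
      intro j
      rw [Nat.testBit_mod_two_pow, Nat.testBit_two_pow_sub_one]
      by_cases hj : j < l
      · have h2 := hX.2 j hj
        have : (X >>> i).testBit j = X.testBit (i + j) := Nat.testBit_shiftRight X
        rw [Nat.shiftRight_eq_div_pow] at this
        simp [hj, this, h2]
      · simp [hj]
    have h1 : X % 2 ^ (i + l) = X % 2 ^ i + 2 ^ i * (2 ^ l - 1) := by
      rw [pow_add, Nat.mod_mul, hmid]
    have h2 := Nat.mod_add_div X (2 ^ (i + l))
    omega
  calc ((Finset.range (2 ^ n)).filter
        (fun X => ∀ j < l, X.testBit (i + j) = true)).card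
      ≤ ((Finset.range (2 ^ i)) ×ˢ (Finset.range (2 ^ (n - i - l)))).card := by
        apply Finset.card_le_card_of_injOn (fun X => (X % 2 ^ i, X / 2 ^ (i + l)))
        · intro X hX
          have hX' := hX
          simp only [Finset.mem_coe, Finset.mem_filter, Finset.mem_range] at hX'
          simp only [Finset.mem_coe, Finset.mem_product, Finset.mem_range]
          refine ⟨Nat.mod_lt _ (Nat.pow_pos (by norm_num)), ?_⟩
          apply Nat.div_lt_of_lt_mul
          calc X < 2 ^ n := hX'.1
            _ = 2 ^ (i + l) * 2 ^ (n - i - l) := by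
                rw [← pow_add]; congr 1; omega
        · intro X hX Y hY hXY
          simp only [Prod.mk.injEq] at hXY
          rw [key X hX, key Y hY, hXY.1, hXY.2]
    _ = 2 ^ i * 2 ^ (n - i - l) := by simp [Finset.card_product]
    _ = 2 ^ (n - l) := by rw [← pow_add]; congr 1; omega

lemma card_longestRun_ge (n l : ℕ) (hl : 0 < l) :
    ((Finset.range (2 ^ n)).filter
        (fun X => l ≤ longestRunOfOnes n X)).card ≤ n * 2 ^ (n - l) := by
  classical
  by_cases hln : l ≤ n
  · have hsub : (Finset.range (2 ^ n)).filter (fun X => l ≤ longestRunOfOnes n X) ⊆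
        (Finset.range (n + 1 - l)).biUnion (fun i =>
          (Finset.range (2 ^ n)).filter (fun X => ∀ j < l, X.testBit (i + j) = true)) := by
      intro X hX
      simp only [Finset.mem_filter, Finset.mem_range] at hX
      obtain ⟨i, hi, hrun⟩ := hasRun_of_le n l X hl hX.2
      simp only [Finset.mem_biUnion, Finset.mem_filter, Finset.mem_range]
      exact ⟨i, by omega, hX.1, hrun⟩
    calc _ ≤ _ := Finset.card_le_card hsub
      _ ≤ ∑ i ∈ Finset.range (n + 1 - l), ((Finset.range (2 ^ n)).filter
            (fun X => ∀ j < l, X.testBit (i + j) = true)).card :=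
          Finset.card_biUnion_le
      _ ≤ ∑ i ∈ Finset.range (n + 1 - l), 2 ^ (n - l) := by
          apply Finset.sum_le_sum
          intro i hi
          simp only [Finset.mem_range] at hi
          exact card_run_event n l i (by omega)
      _ = (n + 1 - l) * 2 ^ (n - l) := by rw [Finset.sum_const, smul_eq_mul, Finset.card_range]
      _ ≤ n * 2 ^ (n - l) := Nat.mul_le_mul_right _ (by omega)
  · have hempty : (Finset.range (2 ^ n)).filter (fun X => l ≤ longestRunOfOnes n X) = ∅ := by
      apply Finset.filter_false_of_mem
      intro X _
      have := longestRun_le n X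
      omega
    simp [hempty]

lemma sum_two_pow (m : ℕ) : ∑ i ∈ Finset.range m, 2 ^ i = 2 ^ m - 1 := by
  induction m with
  | zero => simp
  | succ m ih =>
    rw [Finset.sum_range_succ, ih, pow_succ]
    have : 1 ≤ 2 ^ m := Nat.one_le_two_pow
    omega

lemma sum_longestRun_le (n : ℕ) (hn : 2 ≤ n) :
    ∑ X ∈ Finset.range (2 ^ n), longestRunOfOnes n X ≤ (Nat.clog 2 n + 1) * 2 ^ n := by
  classical
  set L := Nat.clog 2 n with hLdef
  have hnL : n ≤ 2 ^ L := Nat.le_pow_clog (by norm_num) n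
  have hLpos : 0 < L := Nat.clog_pos (by norm_num) hn
  have hLn : L ≤ n := by
    have h1 : 2 ^ (L - 1) < n := by
      have := Nat.pow_pred_clog_lt_self (b := 2) (by norm_num) (x := n) (by omega)
      simpa [Nat.pred_eq_sub_one] using this
    have h2 : L - 1 < 2 ^ (L - 1) := Nat.lt_two_pow_self
    omega
  -- layer cake
  have layer : ∑ X ∈ Finset.range (2 ^ n), longestRunOfOnes n X =
      ∑ l ∈ Finset.range n, ((Finset.range (2 ^ n)).filter
        (fun X => l + 1 ≤ longestRunOfOnes n X)).card := by
    have step : ∀ X ∈ Finset.range (2 ^ n), longestRunOfOnes n X =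
        ∑ l ∈ Finset.range n, if l + 1 ≤ longestRunOfOnes n X then 1 else 0 := by
      intro X _
      have hk := longestRun_le n X
      have : (Finset.range n).filter (fun l => l + 1 ≤ longestRunOfOnes n X) =
          Finset.range (longestRunOfOnes n X) := by
        ext l
        simp only [Finset.mem_filter, Finset.mem_range]
        omega
      rw [← Finset.card_filter, this, Finset.card_range]
    rw [Finset.sum_congr rfl step, Finset.sum_comm]
    apply Finset.sum_congr rfl
    intro l _
    rw [Finset.card_filter]
  rw [layer]
  have hsplit : Finset.range n = Finset.range L ∪ Finset.Ico L n := by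
    rw [Finset.range_eq_Ico, Finset.range_eq_Ico]
    exact (Finset.Ico_union_Ico_eq_Ico (Nat.zero_le L) hLn).symm
  rw [hsplit, Finset.sum_union (by
    rw [Finset.range_eq_Ico]
    exact Finset.Ico_disjoint_Ico_consecutive 0 L n)]
  have hpart1 : ∑ l ∈ Finset.range L, ((Finset.range (2 ^ n)).filter
      (fun X => l + 1 ≤ longestRunOfOnes n X)).card ≤ L * 2 ^ n := by
    calc _ ≤ ∑ l ∈ Finset.range L, 2 ^ n := by
          apply Finset.sum_le_sum
          intro l _
          calc _ ≤ (Finset.range (2 ^ n)).card := Finset.card_filter_le _ _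
            _ = 2 ^ n := Finset.card_range _
      _ = L * 2 ^ n := by rw [Finset.sum_const, smul_eq_mul, Finset.card_range]
  have hpart2 : ∑ l ∈ Finset.Ico L n, ((Finset.range (2 ^ n)).filter
      (fun X => l + 1 ≤ longestRunOfOnes n X)).card ≤ 2 ^ n := by
    calc ∑ l ∈ Finset.Ico L n, ((Finset.range (2 ^ n)).filter
          (fun X => l + 1 ≤ longestRunOfOnes n X)).card
        ≤ ∑ l ∈ Finset.Ico L n, n * 2 ^ (n - (l + 1)) := by
          apply Finset.sum_le_sum
          intro l _
          exact card_longestRun_ge n (l + 1) (by omega)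
      _ = n * ∑ l ∈ Finset.Ico L n, 2 ^ (n - 1 - l) := by
          rw [Finset.mul_sum]
          apply Finset.sum_congr rfl
          intro l hl
          simp only [Finset.mem_Ico] at hl
          congr 2
          omega
      _ = n * ∑ m ∈ Finset.range (n - L), 2 ^ m := by
          congr 1
          apply Finset.sum_nbij' (i := fun l => n - 1 - l) (j := fun m => n - 1 - m)
          · intro l hl
            simp only [Finset.mem_Ico] at hl
            simp only [Finset.mem_range]
            omega
          · intro m hm
            simp only [Finset.mem_range] at hm
            simp only [Finset.mem_Ico]
            omega
          · intro l hl
            simp only [Finset.mem_Ico] at hl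
            omega
          · intro m hm
            simp only [Finset.mem_range] at hm
            omega
          · intro l hl
            rfl
      _ ≤ n * 2 ^ (n - L) := by
          rw [sum_two_pow]
          exact Nat.mul_le_mul_left n (Nat.sub_le _ _)
      _ ≤ 2 ^ L * 2 ^ (n - L) := Nat.mul_le_mul_right _ hnL
      _ = 2 ^ n := by rw [← pow_add]; congr 1; omega
  calc _ ≤ L * 2 ^ n + 2 ^ n := Nat.add_le_add hpart1 hpart2
    _ = (L + 1) * 2 ^ n := by ring

/-- If an adder completes on inputs `A, B` within `2k + 8` parallel steps, where `k` is the
length of the longest contiguous run of unequal addend-pairs `(a_i ≠ b_i)`, then its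
expected number of parallel steps over uniformly random `n`-bit inputs is `O(log n)`, and
its worst case is `O(n)`. -/
theorem adder_time_bounds :
    ∃ C : ℝ, 0 < C ∧ ∀ n : ℕ, 2 ≤ n → ∀ time : ℕ → ℕ → ℕ,
      (∀ A B, A < 2 ^ n → B < 2 ^ n → time A B ≤ 2 * longestDiffRun n A B + 8) →
      ((∑ A ∈ Finset.range (2 ^ n), ∑ B ∈ Finset.range (2 ^ n), (time A B : ℝ)) /
          ((2 ^ n) * (2 ^ n)) ≤ C * Real.log n) ∧
      ∀ A B, A < 2 ^ n → B < 2 ^ n → (time A B : ℝ) ≤ C * n := by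
  classical
  refine ⟨24, by norm_num, fun n hn time htime => ?_⟩
  set L := Nat.clog 2 n with hLdef
  have hLpos : 0 < L := Nat.clog_pos (by norm_num) hn
  -- natural-number bound on the double sum
  have hsumB : ∀ A < 2 ^ n, ∑ B ∈ Finset.range (2 ^ n), longestDiffRun n A B =
      ∑ X ∈ Finset.range (2 ^ n), longestRunOfOnes n X := by
    intro A hA
    unfold longestDiffRun
    apply Finset.sum_nbij' (i := fun B => A ^^^ B) (j := fun X => A ^^^ X)
    · intro B hB
      simp only [Finset.mem_range] at *
      exact Nat.xor_lt_two_pow hA hB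
    · intro X hX
      simp only [Finset.mem_range] at *
      exact Nat.xor_lt_two_pow hA hX
    · intro B _
      simp [← Nat.xor_assoc]
    · intro X _
      simp [← Nat.xor_assoc]
    · intro B _
      rfl
  have hnat : ∑ A ∈ Finset.range (2 ^ n), ∑ B ∈ Finset.range (2 ^ n), time A B ≤
      (2 * (L + 1) + 8) * (2 ^ n * 2 ^ n) := by
    calc ∑ A ∈ Finset.range (2 ^ n), ∑ B ∈ Finset.range (2 ^ n), time A B
        ≤ ∑ A ∈ Finset.range (2 ^ n), ∑ B ∈ Finset.range (2 ^ n),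
            (2 * longestDiffRun n A B + 8) := by
          apply Finset.sum_le_sum
          intro A hA
          apply Finset.sum_le_sum
          intro B hB
          simp only [Finset.mem_range] at hA hB
          exact htime A B hA hB
      _ = ∑ A ∈ Finset.range (2 ^ n),
            (2 * (∑ B ∈ Finset.range (2 ^ n), longestDiffRun n A B) + 8 * 2 ^ n) := by
          apply Finset.sum_congr rfl
          intro A _
          rw [Finset.sum_add_distrib, Finset.sum_const, Finset.card_range, smul_eq_mul,
            ← Finset.mul_sum]
          ring
      _ = ∑ A ∈ Finset.range (2 ^ n),
            (2 * (∑ X ∈ Finset.range (2 ^ n), longestRunOfOnes n X) + 8 * 2 ^ n) := by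
          apply Finset.sum_congr rfl
          intro A hA
          simp only [Finset.mem_range] at hA
          rw [hsumB A hA]
      _ = 2 ^ n * (2 * (∑ X ∈ Finset.range (2 ^ n), longestRunOfOnes n X) + 8 * 2 ^ n) := by
          rw [Finset.sum_const, smul_eq_mul, Finset.card_range]
      _ ≤ 2 ^ n * (2 * ((L + 1) * 2 ^ n) + 8 * 2 ^ n) := by
          apply Nat.mul_le_mul_left
          exact Nat.add_le_add_right (Nat.mul_le_mul_left 2 (sum_longestRun_le n hn)) _
      _ = (2 * (L + 1) + 8) * (2 ^ n * 2 ^ n) := by ring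
  -- the real bound on (L+1)
  have hlog2 : (0.6931471803 : ℝ) < Real.log 2 := Real.log_two_gt_d9
  have hlogn : Real.log 2 ≤ Real.log n := by
    apply Real.log_le_log (by norm_num)
    exact_mod_cast hn
  have hL_real : (L : ℝ) - 1 ≤ Real.log n / Real.log 2 := by
    have h1 : 2 ^ (L - 1) < n :=
      Nat.pow_pred_clog_lt_self (by norm_num) (by omega)
    have h2 : ((2 : ℝ)) ^ ((L : ℕ) - 1) ≤ (n : ℝ) := by
      exact_mod_cast h1.le
    have h3 : ((L - 1 : ℕ) : ℝ) * Real.log 2 ≤ Real.log n := by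
      rw [← Real.log_pow]
      apply Real.log_le_log (by positivity) h2
    have h4 : ((L - 1 : ℕ) : ℝ) = (L : ℝ) - 1 := by
      have : (1 : ℕ) ≤ L := hLpos
      push_cast [Nat.cast_sub this]
      ring
    rw [h4] at h3
    rw [le_div_iff₀ (by linarith)]
    exact h3
  have hC : (2 * ((L : ℝ) + 1) + 8) ≤ 24 * Real.log n := by
    have hlog2pos : (0 : ℝ) < Real.log 2 := by linarith
    have h5 : (L : ℝ) ≤ Real.log n / Real.log 2 + 1 := by linarith
    have h6 : Real.log n / Real.log 2 ≤ Real.log n * (3 / 2) := by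
      rw [div_le_iff₀ hlog2pos]
      have hlognpos : 0 < Real.log n := by linarith
      nlinarith
    have h7 : (12 : ℝ) ≤ 18 * Real.log n := by nlinarith
    nlinarith
  constructor
  · -- average case
    have hpos : (0 : ℝ) < (2 : ℝ) ^ n * (2 : ℝ) ^ n := by positivity
    rw [div_le_iff₀ hpos]
    have hcast : (∑ A ∈ Finset.range (2 ^ n), ∑ B ∈ Finset.range (2 ^ n), (time A B : ℝ)) =
        ((∑ A ∈ Finset.range (2 ^ n), ∑ B ∈ Finset.range (2 ^ n), time A B : ℕ) : ℝ) := by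
      push_cast
      rfl
    rw [hcast]
    calc ((∑ A ∈ Finset.range (2 ^ n), ∑ B ∈ Finset.range (2 ^ n), time A B : ℕ) : ℝ)
        ≤ (((2 * (L + 1) + 8) * (2 ^ n * 2 ^ n) : ℕ) : ℝ) := by exact_mod_cast hnat
      _ = (2 * ((L : ℝ) + 1) + 8) * ((2 : ℝ) ^ n * (2 : ℝ) ^ n) := by push_cast; ring
      _ ≤ (24 * Real.log n) * ((2 : ℝ) ^ n * (2 : ℝ) ^ n) := by
          apply mul_le_mul_of_nonneg_right hC (le_of_lt hpos)
  · -- worst case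
    intro A B hA hB
    have h1 : time A B ≤ 2 * n + 8 := by
      have h2 := htime A B hA hB
      have h3 : longestDiffRun n A B ≤ n := longestRun_le n (A ^^^ B)
      omega
    have h4 : (time A B : ℝ) ≤ 2 * (n : ℝ) + 8 := by exact_mod_cast h1
    have h5 : (2 : ℝ) ≤ (n : ℝ) := by exact_mod_cast hn
    linarith
end
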